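/- Let μ ≥ 2σ > 0 and ε = σ/(μ√(2π)). Then −μ²/(2σ²) + ((1−ε)/ε)·log(1/(1−ε)) ≤ −μ²/(4σ²). -/

import Mathlib

open Real

theorem stmt_5 (μ σ : ℝ) (hσ : 0 < σ) (hμ : 2 * σ ≤ μ)
    (ε : ℝ) (hε : ε = σ / (μ * Real.sqrt (2 * Real.pi))) :
    -μ ^ 2 / (2 * σ ^ 2) + ((1 - ε) / ε) * Real.log (1 / (1 - ε)) ≤ -μ ^ 2 / (4 * σ ^ 2) := by
  have hμ0 : 0 < μ := lt_of_lt_of_le (by linarith) hμ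
  have hs1 : (1:ℝ) < Real.sqrt (2 * Real.pi) := by
    have : (1:ℝ) < 2 * Real.pi := by nlinarith [Real.pi_gt_three]
    nlinarith [Real.sq_sqrt (by positivity : (0:ℝ) ≤ 2 * Real.pi),
      Real.sqrt_nonneg (2 * Real.pi)]
  have hεpos : 0 < ε := by rw [hε]; positivity
  have hεhalf : ε ≤ 1/2 := by
    rw [hε, div_le_iff₀ (by positivity)]
    nlinarith
  have hε1 : ε < 1 := by linarith
  -- log bound: 1 - (1-ε)⁻¹ ≤ log (1-ε)
  have hlog : 1 - (1 - ε)⁻¹ ≤ Real.log (1 - ε) :=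
    Real.one_sub_inv_le_log_of_pos (by linarith)
  have hloginv : Real.log (1 / (1 - ε)) = -Real.log (1 - ε) := by
    rw [one_div, Real.log_inv]
  have hkey : ((1 - ε) / ε) * Real.log (1 / (1 - ε)) ≤ 1 := by
    rw [hloginv]
    have h1 : -Real.log (1 - ε) ≤ (1 - ε)⁻¹ - 1 := by linarith
    have h2 : ((1 - ε) / ε) * (-Real.log (1 - ε)) ≤ ((1 - ε) / ε) * ((1 - ε)⁻¹ - 1) := by
      apply mul_le_mul_of_nonneg_left h1
      have h0 : 0 < 1 - ε := by linarith
      positivity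
    have h1ε : (1 - ε) ≠ 0 := by linarith
    have h3 : ((1 - ε) / ε) * ((1 - ε)⁻¹ - 1) = 1 := by
      field_simp
      ring
    linarith
  have hratio : (1:ℝ) ≤ μ ^ 2 / (4 * σ ^ 2) := by
    rw [le_div_iff₀ (by positivity)]
    nlinarith
  have e1 : -μ ^ 2 / (2 * σ ^ 2) = -2 * (μ ^ 2 / (4 * σ ^ 2)) := by
    field_simp; ring
  have e2 : -μ ^ 2 / (4 * σ ^ 2) = -(μ ^ 2 / (4 * σ ^ 2)) := by ring
  have h4 : -μ ^ 2 / (2 * σ ^ 2) + 1 ≤ -μ ^ 2 / (4 * σ ^ 2) := by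
    rw [e1, e2]; linarith
  linarith
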